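/- Proposition 5(b): Suppose (1−δ)·(f_α+f_β)/2 > c > (1−δ)·f_β, and let g^e be the network whose edges are exactly the pairs {i,j} with at least one endpoint in A (the strongly efficient network of Theorem 2(b)). Then g^e is core-stable if and only if f_β ≥ c. -/

import Mathlib

open Finset

noncomputable section

open scoped Classical

variable {I : Type*}

/-- Benefit function of the two-type connections model: a connection to a
type-α agent (a member of `A`) yields `fα`, a connection to a type-β agent
yields `fβ` (before spatial discounting). -/
def fTheta [DecidableEq I] (A : Finset I) (fα fβ : ℝ) (j : I) : ℝ :=
  if j ∈ A then fα else fβ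

/-- One-period payoff of agent `i` in network `g`:
`u_i(g) = Σ_{j ≠ i reachable from i} δ^(d_g(i,j)-1) f(θ_j) − deg_g(i)·c`. -/
def payoff [Fintype I] (f : I → ℝ) (c δ : ℝ) (g : SimpleGraph I) (i : I) : ℝ :=
  (∑ j ∈ univ.filter fun j => j ≠ i ∧ g.Reachable i j, δ ^ (g.dist i j - 1) * f j)
    - ((univ.filter fun j => g.Adj i j).card : ℝ) * c

/-- Total one-period payoff `ν(g) = Σ_i u_i(g)`. -/
def totalPayoff [Fintype I] (f : I → ℝ) (c δ : ℝ) (g : SimpleGraph I) : ℝ :=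
  ∑ i, payoff f c δ g i

/-- A network is strongly efficient if it maximizes the total payoff. -/
def StronglyEfficient [Fintype I] (f : I → ℝ) (c δ : ℝ) (g : SimpleGraph I) : Prop :=
  ∀ g' : SimpleGraph I, totalPayoff f c δ g' ≤ totalPayoff f c δ g

/-- A network `g` is core-stable if no subgroup `I'` of agents, together with a
network `g'` all of whose links are inside `I'`, gives every member of `I'` a
weakly higher payoff and some member a strictly higher payoff. -/
def CoreStable [Fintype I] (f : I → ℝ) (c δ : ℝ) (g : SimpleGraph I) : Prop :=
  ¬ ∃ (I' : Finset I) (g' : SimpleGraph I),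
      (∀ i j : I, g'.Adj i j → i ∈ I' ∧ j ∈ I') ∧
      (∀ i ∈ I', payoff f c δ g i ≤ payoff f c δ g' i) ∧
      (∃ i ∈ I', payoff f c δ g i < payoff f c δ g' i)

/-- The network whose links are exactly the pairs with at least one endpoint in `A`. -/
def withCore (A : Finset I) : SimpleGraph I where
  Adj i j := i ≠ j ∧ (i ∈ A ∨ j ∈ A)
  symm := ⟨fun i j h => ⟨h.1.symm, h.2.symm⟩⟩
  loopless := ⟨fun i h => h.1 rfl⟩

/-- The clique on `A`: exactly all pairs of distinct members of `A` are linked. -/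
def cliqueOn (A : Finset I) : SimpleGraph I where
  Adj i j := i ≠ j ∧ i ∈ A ∧ j ∈ A
  symm := ⟨fun i j h => ⟨h.1.symm, h.2.2, h.2.1⟩⟩
  loopless := ⟨fun i h => h.1 rfl⟩

/-- Clique on `A` together with the links `{i₀, j}` for every agent `j ∉ A`. -/
def coreStar (A : Finset I) (i₀ : I) : SimpleGraph I where
  Adj i j := i ≠ j ∧ ((i ∈ A ∧ j ∈ A) ∨ (i = i₀ ∧ j ∉ A) ∨ (j = i₀ ∧ i ∉ A))
  symm := by
    refine ⟨?_⟩
    rintro i j ⟨hne, h⟩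
    refine ⟨hne.symm, ?_⟩
    rcases h with h | h | h
    · exact Or.inl ⟨h.2, h.1⟩
    · exact Or.inr (Or.inr h)
    · exact Or.inr (Or.inl h)
  loopless := ⟨fun i h => h.1 rfl⟩

/-- The star on all agents centered at `i₀`. -/
def starAll (i₀ : I) : SimpleGraph I where
  Adj i j := i ≠ j ∧ (i = i₀ ∨ j = i₀)
  symm := ⟨fun i j h => ⟨h.1.symm, h.2.symm⟩⟩
  loopless := ⟨fun i h => h.1 rfl⟩

/-- The star on the agents in `A`, centered at `i₀`. -/
def starOn (A : Finset I) (i₀ : I) : SimpleGraph I where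
  Adj i j := i ≠ j ∧ (i = i₀ ∨ j = i₀) ∧ i ∈ A ∧ j ∈ A
  symm := ⟨fun i j h => ⟨h.1.symm, h.2.1.symm, h.2.2.2, h.2.2.1⟩⟩
  loopless := ⟨fun i h => h.1 rfl⟩


namespace Prop5bAux

/-- Per-partner contribution to the payoff. -/
def contrib [Fintype I] (f : I → ℝ) (c δ : ℝ) (g : SimpleGraph I) (i j : I) : ℝ :=
  (if j ≠ i ∧ g.Reachable i j then δ ^ (g.dist i j - 1) * f j else 0)
    - (if g.Adj i j then c else 0)

theorem payoff_eq_sum [Fintype I] (f : I → ℝ) (c δ : ℝ) (g : SimpleGraph I) (i : I) :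
    payoff f c δ g i = ∑ j, contrib f c δ g i j := by
  unfold payoff contrib
  rw [Finset.sum_sub_distrib]
  congr 1
  · rw [Finset.sum_filter]
  · rw [← Finset.sum_filter, Finset.sum_const, nsmul_eq_mul]

theorem contrib_self [Fintype I] (f : I → ℝ) (c δ : ℝ) (g : SimpleGraph I) (i : I) :
    contrib f c δ g i i = 0 := by
  simp [contrib, g.loopless.irrefl i]

theorem contrib_of_adj [Fintype I] (f : I → ℝ) (c δ : ℝ) {g : SimpleGraph I} {i j : I}
    (h : g.Adj i j) : contrib f c δ g i j = f j - c := by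
  have hd : g.dist i j = 1 := SimpleGraph.dist_eq_one_iff_adj.mpr h
  simp [contrib, h.ne', h.reachable, hd, h]

theorem contrib_of_not_reach [Fintype I] (f : I → ℝ) (c δ : ℝ) {g : SimpleGraph I} {i j : I}
    (h : ¬ g.Reachable i j) : contrib f c δ g i j = 0 := by
  have hadj : ¬ g.Adj i j := fun ha => h ha.reachable
  simp [contrib, h, hadj]

theorem two_le_dist [Fintype I] {g : SimpleGraph I} {i j : I}
    (hne : j ≠ i) (hr : g.Reachable i j) (hadj : ¬ g.Adj i j) : 2 ≤ g.dist i j := by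
  have h0 : g.dist i j ≠ 0 := by
    intro h
    exact hne (hr.dist_eq_zero_iff.mp h).symm
  have h1 : g.dist i j ≠ 1 := fun h => hadj (SimpleGraph.dist_eq_one_iff_adj.mp h)
  omega

theorem contrib_of_not_adj [Fintype I] (f : I → ℝ) (c δ : ℝ) {g : SimpleGraph I} {i j : I}
    (hne : j ≠ i) (hr : g.Reachable i j) (hadj : ¬ g.Adj i j) :
    contrib f c δ g i j = δ ^ (g.dist i j - 1) * f j := by
  simp [contrib, hne, hr, hadj]

/-- In a graph all of whose edges end in `s`, any vertex reachable from `i` and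
distinct from `i` lies in `s`. -/
theorem mem_of_reachable {g : SimpleGraph I} {s : Finset I}
    (hE : ∀ i j : I, g.Adj i j → j ∈ s) {i j : I} (hne : j ≠ i)
    (hr : g.Reachable i j) : j ∈ s := by
  obtain ⟨w⟩ := hr.symm
  cases w with
  | nil => exact absurd rfl hne
  | cons h p => exact hE _ _ h.symm

section Bounds

variable [Fintype I] [DecidableEq I]
variable {A : Finset I} {fα fβ c δ : ℝ}

/-- Upper bound on the contribution of partner `j` in any network. -/
def bnd (A : Finset I) (fα fβ c δ : ℝ) (i j : I) : ℝ :=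
  if j = i then 0 else if j ∈ A then fα - c else δ * fβ

/-- Value of the contribution of `j` to an `α`-agent in the efficient network. -/
def bndA (A : Finset I) (fα fβ c : ℝ) (i j : I) : ℝ :=
  if j = i then 0 else (if j ∈ A then fα else fβ) - c

omit [Fintype I] [DecidableEq I] in
theorem pow_dist_le {g : SimpleGraph I} {i j : I} (hδ0 : 0 < δ) (hδ1 : δ < 1)
    (h2d : 2 ≤ g.dist i j) : δ ^ (g.dist i j - 1) ≤ δ := by
  have : δ ^ (g.dist i j - 1) ≤ δ ^ 1 :=
    pow_le_pow_of_le_one hδ0.le hδ1.le (by omega)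
  simpa using this

theorem contrib_le_bnd (hfαβ : fβ < fα) (hfβ : 0 < fβ)
    (hδ0 : 0 < δ) (hδ1 : δ < 1) (hαc : c < (1 - δ) * fα) (h2 : c > (1 - δ) * fβ)
    (g : SimpleGraph I) (i j : I) :
    contrib (fTheta A fα fβ) c δ g i j ≤ bnd A fα fβ c δ i j := by
  have hfα : 0 < fα := hfβ.trans hfαβ
  have hδα : δ * fα < fα - c := by nlinarith
  have hβδ : fβ - c < δ * fβ := by nlinarith
  unfold bnd
  rcases eq_or_ne j i with rfl | hne
  · simp [contrib_self]
  · rw [if_neg hne]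
    by_cases hadj : g.Adj i j
    · rw [contrib_of_adj _ _ _ hadj]
      unfold fTheta
      split_ifs with hjA
      · exact le_rfl
      · exact hβδ.le
    · by_cases hr : g.Reachable i j
      · rw [contrib_of_not_adj _ _ _ hne hr hadj]
        have h2d := two_le_dist hne hr hadj
        have hpow := pow_dist_le (δ := δ) hδ0 hδ1 h2d
        unfold fTheta
        split_ifs with hjA
        · calc δ ^ (g.dist i j - 1) * fα ≤ δ * fα :=
                mul_le_mul_of_nonneg_right hpow hfα.le
            _ ≤ fα - c := hδα.le
        · exact mul_le_mul_of_nonneg_right hpow hfβ.le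
      · rw [contrib_of_not_reach _ _ _ hr]
        split_ifs with hjA
        · nlinarith
        · positivity

theorem forced_adj (hfαβ : fβ < fα) (hfβ : 0 < fβ)
    (hδ0 : 0 < δ) (hδ1 : δ < 1) (hαc : c < (1 - δ) * fα)
    {g : SimpleGraph I} {i j : I} (hne : j ≠ i) (hjA : j ∈ A)
    (heq : contrib (fTheta A fα fβ) c δ g i j = fα - c) : g.Adj i j := by
  have hfα : 0 < fα := hfβ.trans hfαβ
  have hδα : δ * fα < fα - c := by nlinarith
  by_contra hadj
  by_cases hr : g.Reachable i j
  · rw [contrib_of_not_adj _ _ _ hne hr hadj] at heq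
    have h2d := two_le_dist hne hr hadj
    have hpow := pow_dist_le (δ := δ) hδ0 hδ1 h2d
    have hfj : fTheta A fα fβ j = fα := if_pos hjA
    rw [hfj] at heq
    nlinarith [mul_le_mul_of_nonneg_right hpow hfα.le]
  · rw [contrib_of_not_reach _ _ _ hr] at heq
    nlinarith

theorem forced_beta {fα : ℝ} (hfβ : 0 < fβ)
    (hδ0 : 0 < δ) (hδ1 : δ < 1) (h2 : c > (1 - δ) * fβ)
    {g : SimpleGraph I} {i j : I} (hne : j ≠ i) (hjA : j ∉ A)
    (heq : contrib (fTheta A fα fβ) c δ g i j = δ * fβ) :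
    ¬ g.Adj i j ∧ g.Reachable i j := by
  have hβδ : fβ - c < δ * fβ := by nlinarith
  constructor
  · intro hadj
    rw [contrib_of_adj _ _ _ hadj] at heq
    have hfj : fTheta A fα fβ j = fβ := if_neg hjA
    rw [hfj] at heq
    linarith
  · by_contra hr
    rw [contrib_of_not_reach _ _ _ hr] at heq
    nlinarith

theorem contrib_withCore_alpha {i : I} (ha : i ∈ A) (j : I) :
    contrib (fTheta A fα fβ) c δ (withCore A) i j = bndA A fα fβ c i j := by
  unfold bndA
  rcases eq_or_ne j i with rfl | hne
  · simp [contrib_self]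
  · rw [if_neg hne]
    have hadj : (withCore A).Adj i j := And.intro (fun h => hne h.symm) (Or.inl ha)
    rw [contrib_of_adj _ _ _ hadj]
    rfl

theorem contrib_withCore_beta {i : I} (hb : i ∉ A) (hAne : A.Nonempty) (j : I) :
    contrib (fTheta A fα fβ) c δ (withCore A) i j = bnd A fα fβ c δ i j := by
  unfold bnd
  rcases eq_or_ne j i with rfl | hne
  · simp [contrib_self]
  · rw [if_neg hne]
    by_cases hjA : j ∈ A
    · rw [if_pos hjA]
      have hadj : (withCore A).Adj i j := And.intro (fun h => hne h.symm) (Or.inr hjA)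
      rw [contrib_of_adj _ _ _ hadj]
      simp [fTheta, hjA]
    · rw [if_neg hjA]
      obtain ⟨a, haA⟩ := hAne
      have hia : i ≠ a := fun h => hb (h ▸ haA)
      have haj : a ≠ j := fun h => hjA (h ▸ haA)
      have hadj : ¬ (withCore A).Adj i j := by
        rintro (⟨-, h | h⟩ : i ≠ j ∧ (i ∈ A ∨ j ∈ A))
        · exact hb h
        · exact hjA h
      have e1 : (withCore A).Adj i a := And.intro hia (Or.inr haA)
      have e2 : (withCore A).Adj a j := And.intro haj (Or.inl haA)
      have hr : (withCore A).Reachable i j :=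
        ⟨SimpleGraph.Walk.cons e1 (SimpleGraph.Walk.cons e2 SimpleGraph.Walk.nil)⟩
      have hd2 : (withCore A).dist i j ≤ 2 := by
        have := SimpleGraph.dist_le
          (SimpleGraph.Walk.cons e1 (SimpleGraph.Walk.cons e2 SimpleGraph.Walk.nil))
        simpa using this
      have hd : (withCore A).dist i j = 2 :=
        le_antisymm hd2 (two_le_dist hne hr hadj)
      rw [contrib_of_not_adj _ _ _ hne hr hadj, hd]
      simp [fTheta, hjA]

theorem contrib_cliqueOn {i : I} (ha : i ∈ A) (j : I) :
    contrib (fTheta A fα fβ) c δ (cliqueOn A) i j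
      = if j = i then 0 else if j ∈ A then fα - c else 0 := by
  rcases eq_or_ne j i with rfl | hne
  · simp [contrib_self]
  · rw [if_neg hne]
    by_cases hjA : j ∈ A
    · rw [if_pos hjA]
      have hadj : (cliqueOn A).Adj i j := And.intro (fun h => hne h.symm) ⟨ha, hjA⟩
      rw [contrib_of_adj _ _ _ hadj]
      simp [fTheta, hjA]
    · rw [if_neg hjA]
      have hr : ¬ (cliqueOn A).Reachable i j := by
        intro hr
        exact hjA (mem_of_reachable (fun a b (h : (cliqueOn A).Adj a b) => (show a ≠ b ∧ a ∈ A ∧ b ∈ A from h).2.2) hne hr)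
      exact contrib_of_not_reach _ _ _ hr

end Bounds

end Prop5bAux

open Prop5bAux

/-- Proposition 5(b): under the conditions of Theorem 2(b), the strongly
efficient network is core-stable iff `fβ ≥ c`. -/
theorem prop5b {I : Type*} [Fintype I] [DecidableEq I]
    (A : Finset I) (fα fβ c δ : ℝ)
    (hA : 1 ≤ A.card) (hB : 1 ≤ Aᶜ.card)
    (hfαβ : fβ < fα) (hfβ : 0 < fβ) (hc : 0 < c)
    (hδ0 : 0 < δ) (hδ1 : δ < 1)
    (h1 : (1 - δ) * ((fα + fβ) / 2) > c) (h2 : c > (1 - δ) * fβ) :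
    CoreStable (fTheta A fα fβ) c δ (withCore A) ↔ fβ ≥ c := by
  have hAne : A.Nonempty := Finset.card_pos.mp hA
  have hfα : 0 < fα := hfβ.trans hfαβ
  have hαc : c < (1 - δ) * fα := by nlinarith
  constructor
  · -- core stability implies fβ ≥ c
    intro hcs
    by_contra hge
    push_neg at hge
    exfalso
    apply hcs
    obtain ⟨b, hbB⟩ := Finset.card_pos.mp hB
    have hbA : b ∉ A := Finset.mem_compl.mp hbB
    obtain ⟨a, haA⟩ := hAne
    have key : ∀ a' ∈ A, payoff (fTheta A fα fβ) c δ (withCore A) a'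
        < payoff (fTheta A fα fβ) c δ (cliqueOn A) a' := by
      intro a' ha'
      rw [payoff_eq_sum, payoff_eq_sum]
      apply Finset.sum_lt_sum
      · intro j _
        rw [contrib_withCore_alpha ha', contrib_cliqueOn ha']
        unfold bndA
        rcases eq_or_ne j a' with rfl | hne
        · simp
        · rw [if_neg hne, if_neg hne]
          by_cases hjA : j ∈ A
          · rw [if_pos hjA, if_pos hjA]
          · rw [if_neg hjA, if_neg hjA]
            linarith
      · refine ⟨b, Finset.mem_univ b, ?_⟩
        rw [contrib_withCore_alpha ha', contrib_cliqueOn ha']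
        have hne : b ≠ a' := fun h => hbA (h ▸ ha')
        unfold bndA
        rw [if_neg hne, if_neg hne, if_neg hbA, if_neg hbA]
        linarith
    exact ⟨A, cliqueOn A, fun i j h => (show i ≠ j ∧ i ∈ A ∧ j ∈ A from h).2,
      fun i hi => (key i hi).le, a, haA, key a haA⟩
  · -- fβ ≥ c implies core stability
    intro hβc
    rintro ⟨I', g', hIn, hW, w, hwI, hwS⟩
    have hbound : ∀ i j : I, contrib (fTheta A fα fβ) c δ g' i j ≤ bnd A fα fβ c δ i j :=
      fun i j => contrib_le_bnd hfαβ hfβ hδ0 hδ1 hαc h2 g' i j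
    have hreach_mem : ∀ i j : I, j ≠ i → g'.Reachable i j → j ∈ I' :=
      fun i j hne hr => mem_of_reachable (fun a b h => (hIn a b h).2) hne hr
    by_cases hcase : ∃ b ∈ I', b ∉ A
    · -- a β agent belongs to the coalition
      obtain ⟨b, hbI, hbA⟩ := hcase
      have betaEq : ∀ b', b' ∉ A → b' ∈ I' →
          ∀ j, contrib (fTheta A fα fβ) c δ g' b' j = bnd A fα fβ c δ b' j := by
        intro b' hb'A hb'I j
        have h1 := hW b' hb'I
        rw [payoff_eq_sum, payoff_eq_sum] at h1
        have h3 : ∑ j, contrib (fTheta A fα fβ) c δ (withCore A) b' j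
            = ∑ j, bnd A fα fβ c δ b' j :=
          Finset.sum_congr rfl fun j _ => contrib_withCore_beta hb'A hAne j
        have heq : ∑ j, contrib (fTheta A fα fβ) c δ g' b' j = ∑ j, bnd A fα fβ c δ b' j :=
          le_antisymm (Finset.sum_le_sum fun j _ => hbound b' j) (h3 ▸ h1)
        exact (Finset.sum_eq_sum_iff_of_le fun j _ => hbound b' j).mp heq j (Finset.mem_univ j)
      have hadjA : ∀ b', b' ∉ A → b' ∈ I' → ∀ j ∈ A, g'.Adj b' j := by
        intro b' hb' hb'I j hjA
        have hne : j ≠ b' := fun h => hb' (h ▸ hjA)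
        have h := betaEq b' hb' hb'I j
        rw [bnd, if_neg hne, if_pos hjA] at h
        exact forced_adj hfαβ hfβ hδ0 hδ1 hαc hne hjA h
      have hβbeta : ∀ b', b' ∉ A → b' ∈ I' → ∀ j, j ∉ A → j ≠ b' →
          ¬ g'.Adj b' j ∧ g'.Reachable b' j := by
        intro b' hb' hb'I j hjA hne
        have h := betaEq b' hb' hb'I j
        rw [bnd, if_neg hne, if_neg hjA] at h
        exact forced_beta hfβ hδ0 hδ1 h2 hne hjA h
      have hall : ∀ j, j ∈ I' := by
        intro j
        by_cases hjA : j ∈ A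
        · exact (hIn b j (hadjA b hbA hbI j hjA)).2
        · rcases eq_or_ne j b with rfl | hne
          · exact hbI
          · exact hreach_mem b j hne (hβbeta b hbA hbI j hjA hne).2
      have hfin : ∀ i, payoff (fTheta A fα fβ) c δ g' i
          ≤ payoff (fTheta A fα fβ) c δ (withCore A) i := by
        intro i
        rw [payoff_eq_sum, payoff_eq_sum]
        by_cases hiA : i ∈ A
        · apply Finset.sum_le_sum
          intro j _
          rw [contrib_withCore_alpha hiA]
          unfold bndA
          rcases eq_or_ne j i with rfl | hne
          · rw [if_pos rfl, contrib_self]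
          · rw [if_neg hne]
            by_cases hjA : j ∈ A
            · rw [if_pos hjA]
              have h := hbound i j
              rwa [bnd, if_neg hne, if_pos hjA] at h
            · rw [if_neg hjA]
              have hadj : g'.Adj i j :=
                (hadjA j hjA (hall j) i hiA).symm
              rw [contrib_of_adj _ _ _ hadj]
              simp [fTheta, hjA]
        · calc ∑ j, contrib (fTheta A fα fβ) c δ g' i j
              ≤ ∑ j, bnd A fα fβ c δ i j := Finset.sum_le_sum fun j _ => hbound i j
            _ = ∑ j, contrib (fTheta A fα fβ) c δ (withCore A) i j :=
              (Finset.sum_congr rfl fun j _ => contrib_withCore_beta hiA hAne j).symm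
      exact absurd hwS (not_lt.mpr (hfin w))
    · -- the coalition lies inside A
      push_neg at hcase
      have hwA : w ∈ A := hcase w hwI
      have hfin : payoff (fTheta A fα fβ) c δ g' w
          ≤ payoff (fTheta A fα fβ) c δ (withCore A) w := by
        rw [payoff_eq_sum, payoff_eq_sum]
        apply Finset.sum_le_sum
        intro j _
        rw [contrib_withCore_alpha hwA]
        unfold bndA
        rcases eq_or_ne j w with rfl | hne
        · rw [if_pos rfl, contrib_self]
        · rw [if_neg hne]
          by_cases hjA : j ∈ A
          · rw [if_pos hjA]
            have h := hbound w j
            rwa [bnd, if_neg hne, if_pos hjA] at h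
          · rw [if_neg hjA]
            have hjI : j ∉ I' := fun hj => hjA (hcase j hj)
            have hr : ¬ g'.Reachable w j := fun hr => hjI (hreach_mem w j hne hr)
            rw [contrib_of_not_reach _ _ _ hr]
            linarith
      exact absurd hwS (not_lt.mpr hfin)
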